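/- Let X = ℝ with the usual order and metric d(x,y) = |x−y|, and let F : ℝ × ℝ → ℝ be defined by F(x,y) = (x − 3y)/5. Then F does NOT satisfy Samet's generalized Meir–Keeler condition: it is not the case that for each ε > 0 there exists δ(ε) > 0 such that for all x,y,u,v ∈ ℝ with x ≥ u and y ≤ v, ε ≤ (1/2)[|x−u|+|y−v|] < ε+δ(ε) implies |F(x,y) − F(u,v)| < ε. -/

import Mathlib

theorem example_not_samet_meir_keeler :
    let F : ℝ → ℝ → ℝ := fun x y => (x - 3 * y) / 5
    ¬ (∀ ε > (0 : ℝ), ∃ δ > (0 : ℝ), ∀ x y u v : ℝ, u ≤ x → y ≤ v →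
        ε ≤ (|x - u| + |y - v|) / 2 → (|x - u| + |y - v|) / 2 < ε + δ →
        |F x y - F u v| < ε) := by
  intro F h
  obtain ⟨δ, hδ, H⟩ := h 1 one_pos
  have := H 0 0 0 2 le_rfl (by norm_num) (by norm_num) (by norm_num; linarith)
  simp only [F] at this
  norm_num at this
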